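/- arXiv:2312.11696 — 3 statements merged into one kernel-verified Lean document; each statement's English description precedes it below -/
import Mathlib

section
/- For every natural number n, the difference between consecutive whole numbers in base φ satisfies n+1‾ − n‾ = φ^(−|n|); that is, the difference equals 1 if the zeroth Zeckendorf digit of n is 0, and equals φ^(−1) if it is 1. -/
open Finset

/-- `F m` denotes `F^m := F_{m+2}`, the Fibonacci numbers with shifted index,
so `F^{-2} = 0`, `F^{-1} = 1`, `F^0 = 1`, `F^1 = 2`, … (and `F^m = 0` for `m < -2`). -/
def F (m : ℤ) : ℕ := Nat.fib (m + 2).toNat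

lemma F_pos (m : ℤ) (h : -2 < m) : 0 < F m := Nat.fib_pos.mpr (by omega)

/-- The set of indices of the `1` digits in the (unique) Zeckendorf representation
`n = ∑_{j ∈ zeckSet n} F^j` (no two consecutive indices), computed greedily. -/
def zeckSet : ℕ → Finset ℕ
  | 0 => ∅
  | (n + 1) =>
      insert (Nat.findGreatest (fun i => F i ≤ n + 1) (n + 1))
        (zeckSet (n + 1 - F (Nat.findGreatest (fun i => F i ≤ n + 1) (n + 1))))
decreasing_by exact Nat.sub_lt (Nat.succ_pos n) (F_pos _ (by omega))

lemma F_coe (j : ℕ) : F j = Nat.fib (j + 2) := by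
  have h : ((j:ℤ)+2).toNat = j+2 := by omega
  simp only [F, h]

lemma F_rec (j : ℕ) : F ((j+2:ℕ):ℤ) = F ((j+1:ℕ):ℤ) + F (j:ℤ) := by
  rw [F_coe, F_coe, F_coe]
  have := Nat.fib_add_two (n := j+2)
  have h2 : Nat.fib (j+2+1) = Nat.fib (j+1+2) := rfl
  omega

lemma F_mono : StrictMono (fun j : ℕ => F (j:ℤ)) := by
  apply strictMono_nat_of_lt_succ
  intro j
  show F (j:ℤ) < F ((j+1:ℕ):ℤ)
  rw [F_coe, F_coe]
  exact Nat.fib_lt_fib_succ (by omega)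

lemma F_ge (j : ℕ) : j + 1 ≤ F (j:ℤ) := by
  induction j with
  | zero => decide
  | succ k ih =>
    rw [F_coe] at ih ⊢
    have := Nat.fib_add_two (n := k+1)
    have h1 : 1 ≤ Nat.fib (k+1) := Nat.fib_pos.mpr (by omega)
    have h2 : Nat.fib (k+1+2) = Nat.fib (k+1) + Nat.fib (k+1+1) := Nat.fib_add_two
    have h3 : Nat.fib (k+1+1) = Nat.fib (k+2) := rfl
    omega

lemma zeckSet_zero : zeckSet 0 = ∅ := by rw [zeckSet]

lemma zeckSet_succ (n : ℕ) : zeckSet (n+1) =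
    insert (Nat.findGreatest (fun i => F i ≤ n + 1) (n + 1))
      (zeckSet (n + 1 - F (Nat.findGreatest (fun i => F i ≤ n + 1) (n + 1)))) := by
  rw [zeckSet]

lemma F_carg {a b : ℕ} (h : a = b) : F (a:ℤ) = F (b:ℤ) := by rw [h]

lemma F_zero : F ((0:ℕ):ℤ) = 1 := by decide
lemma F_one' : F ((1:ℕ):ℤ) = 2 := by decide

lemma F_one_le (n : ℕ) : F ((0:ℕ):ℤ) ≤ n + 1 := by rw [F_zero]; omega

lemma zeck_spec (n : ℕ) : (∀ i ∈ zeckSet n, i+1 ∉ zeckSet n) ∧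
    (∑ j ∈ zeckSet n, F (j:ℤ) = n) ∧ (∀ j ∈ zeckSet n, F (j:ℤ) ≤ n) := by
  induction n using Nat.strong_induction_on with
  | _ n IH =>
    match n with
    | 0 => simp [zeckSet_zero]
    | (n+1) =>
      rw [zeckSet_succ]
      have hkey : ∀ g : ℕ, Nat.findGreatest (fun i => F i ≤ n + 1) (n + 1) = g →
          F (g:ℤ) ≤ n + 1 ∧ n + 1 < F ((g+1:ℕ):ℤ) := by
        intro g hgn
        have hg1 : F (g:ℤ) ≤ n + 1 := by
          rw [← hgn]
          exact Nat.findGreatest_spec (P := fun i => F (i:ℤ) ≤ n+1) (Nat.zero_le _) (F_one_le n)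
        refine ⟨hg1, ?_⟩
        by_contra h
        push_neg at h
        have hkn : g + 1 ≤ n + 1 := by have := F_ge (g+1); omega
        have hlt : Nat.findGreatest (fun i => F (i:ℤ) ≤ n+1) (n+1) < g + 1 := by omega
        exact Nat.findGreatest_is_greatest hlt hkn h
      rcases hgn : Nat.findGreatest (fun i => F i ≤ n + 1) (n + 1) with _ | g'
      · obtain ⟨hg1, hgub⟩ := hkey 0 hgn
        have h2 : F ((0+1:ℕ):ℤ) = 2 := F_one'
        have h1 : F ((0:ℕ):ℤ) = 1 := F_zero
        have hn0 : n = 0 := by omega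
        subst hn0
        rw [h1]
        norm_num [zeckSet_zero, h1]
        exact ⟨by decide, by decide⟩
      · obtain ⟨hg1, hgub⟩ := hkey (g'+1) hgn
        have hrec := F_rec g'
        have ecast : F ((g'+1+1:ℕ):ℤ) = F ((g'+2:ℕ):ℤ) := F_carg (by omega)
        have hrlt : n + 1 - F ((g'+1:ℕ):ℤ) < F ((g':ℕ):ℤ) := by omega
        have hFpos : 0 < F ((g'+1:ℕ):ℤ) := F_pos _ (by omega)
        set r := n + 1 - F ((g'+1:ℕ):ℤ) with hrdef
        obtain ⟨hv, hs, hb⟩ := IH r (by omega)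
        have helem : ∀ j ∈ zeckSet r, j < g' := by
          intro j hj
          have : F (j:ℤ) < F ((g':ℕ):ℤ) := lt_of_le_of_lt (hb j hj) hrlt
          exact F_mono.lt_iff_lt.mp this
        have hnotmem : (g'+1) ∉ zeckSet r := fun h => by have := helem _ h; omega
        refine ⟨?_, ?_, ?_⟩
        · intro i hi
          rcases Finset.mem_insert.mp hi with h | h
          · subst h
            intro hc
            rcases Finset.mem_insert.mp hc with h' | h'
            · omega
            · have := helem _ h'; omega
          · intro hc
            rcases Finset.mem_insert.mp hc with h' | h'
            · have := helem _ h; omega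
            · exact hv _ h h'
        · rw [Finset.sum_insert hnotmem, hs]
          omega
        · intro j hj
          rcases Finset.mem_insert.mp hj with h | h
          · subst h; exact hg1
          · have := hb _ h; omega

lemma zeck_bound (m : ℕ) : ∀ S : Finset ℕ, (∀ i ∈ S, i+1 ∉ S) → (∀ j ∈ S, j < m) →
    ∑ j ∈ S, F (j:ℤ) < F (m:ℤ) := by
  induction m using Nat.strong_induction_on with
  | _ m IH =>
    intro S hv hlt
    match m with
    | 0 =>
      have : S = ∅ := Finset.eq_empty_of_forall_notMem (fun j hj => by have := hlt j hj; omega)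
      subst this
      simpa using F_pos 0 (by omega)
    | 1 =>
      have hsub : S ⊆ {0} := fun j hj => Finset.mem_singleton.mpr (by have := hlt j hj; omega)
      have : ∑ j ∈ S, F (j:ℤ) ≤ ∑ j ∈ ({0} : Finset ℕ), F (j:ℤ) :=
        Finset.sum_le_sum_of_subset hsub
      simp only [Finset.sum_singleton] at this
      have h0 : F ((0:ℕ):ℤ) = 1 := F_zero
      have h1 : F ((1:ℕ):ℤ) = 2 := F_one'
      omega
    | (m'+2) =>
      by_cases hm : m'+1 ∈ S
      · have hm' : m' ∉ S := fun h => hv m' h hm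
        have herase : ∀ j ∈ S.erase (m'+1), j < m' := by
          intro j hj
          have h1 := Finset.mem_of_mem_erase hj
          have h2 := Finset.ne_of_mem_erase hj
          have := hlt j h1
          have : j ≠ m' := fun h => hm' (h ▸ h1)
          omega
        have hvE : ∀ i ∈ S.erase (m'+1), i+1 ∉ S.erase (m'+1) := by
          intro i hi hc
          exact hv i (Finset.mem_of_mem_erase hi) (Finset.mem_of_mem_erase hc)
        have hb := IH m' (by omega) _ hvE herase
        have hsum : ∑ j ∈ S, F (j:ℤ) = F ((m'+1:ℕ):ℤ) + ∑ j ∈ S.erase (m'+1), F (j:ℤ) :=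
          (Finset.add_sum_erase _ _ hm).symm
        have hrec := F_rec m'
        omega
      · have hlt' : ∀ j ∈ S, j < m'+1 := by
          intro j hj
          have := hlt j hj
          have : j ≠ m'+1 := fun h => hm (h ▸ hj)
          omega
        have hb := IH (m'+1) (by omega) _ hv hlt'
        have : F ((m'+1:ℕ):ℤ) < F ((m'+2:ℕ):ℤ) := F_mono (by omega)
        omega

lemma zeck_unique (n : ℕ) : ∀ S T : Finset ℕ,
    (∀ i ∈ S, i+1 ∉ S) → (∀ i ∈ T, i+1 ∉ T) →
    ∑ j ∈ S, F (j:ℤ) = n → ∑ j ∈ T, F (j:ℤ) = n → S = T := by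
  induction n using Nat.strong_induction_on with
  | _ n IH =>
    intro S T hvS hvT hsS hsT
    rcases Nat.eq_zero_or_pos n with rfl | hn
    · have hS : S = ∅ := by
        by_contra h
        obtain ⟨j, hj⟩ := Finset.nonempty_of_ne_empty h
        have h1 : F (j:ℤ) ≤ ∑ j ∈ S, F (j:ℤ) :=
          Finset.single_le_sum (f := fun j : ℕ => F (j:ℤ)) (fun i _ => Nat.zero_le _) hj
        have := F_pos j (by omega)
        omega
      have hT : T = ∅ := by
        by_contra h
        obtain ⟨j, hj⟩ := Finset.nonempty_of_ne_empty h
        have h1 : F (j:ℤ) ≤ ∑ j ∈ T, F (j:ℤ) :=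
          Finset.single_le_sum (f := fun j : ℕ => F (j:ℤ)) (fun i _ => Nat.zero_le _) hj
        have := F_pos j (by omega)
        omega
      rw [hS, hT]
    · have hSne : S.Nonempty := by
        by_contra h
        rw [Finset.not_nonempty_iff_eq_empty] at h
        subst h; simp at hsS; omega
      have hTne : T.Nonempty := by
        by_contra h
        rw [Finset.not_nonempty_iff_eq_empty] at h
        subst h; simp at hsT; omega
      obtain ⟨mS, hmS⟩ : ∃ m, S.max' hSne = m := ⟨_, rfl⟩
      obtain ⟨mT, hmT⟩ : ∃ m, T.max' hTne = m := ⟨_, rfl⟩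
      have hmemS : mS ∈ S := hmS ▸ S.max'_mem hSne
      have hmemT : mT ∈ T := hmT ▸ T.max'_mem hTne
      have hboundS : ∑ j ∈ S, F (j:ℤ) < F ((mS+1:ℕ):ℤ) :=
        zeck_bound (mS+1) S hvS (fun j hj => by have := S.le_max' j hj; omega)
      have hboundT : ∑ j ∈ T, F (j:ℤ) < F ((mT+1:ℕ):ℤ) :=
        zeck_bound (mT+1) T hvT (fun j hj => by have := T.le_max' j hj; omega)
      have hgeS : F ((mS:ℕ):ℤ) ≤ ∑ j ∈ S, F (j:ℤ) :=
        Finset.single_le_sum (f := fun j : ℕ => F (j:ℤ)) (fun i _ => Nat.zero_le _) hmemS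
      have hgeT : F ((mT:ℕ):ℤ) ≤ ∑ j ∈ T, F (j:ℤ) :=
        Finset.single_le_sum (f := fun j : ℕ => F (j:ℤ)) (fun i _ => Nat.zero_le _) hmemT
      have hmeq : mS = mT := by
        rcases lt_trichotomy mS mT with h | h | h
        · have : F ((mS+1:ℕ):ℤ) ≤ F ((mT:ℕ):ℤ) := F_mono.le_iff_le.mpr (by omega)
          omega
        · exact h
        · have : F ((mT+1:ℕ):ℤ) ≤ F ((mS:ℕ):ℤ) := F_mono.le_iff_le.mpr (by omega)
          omega
      subst hmeq
      have hvSE : ∀ i ∈ S.erase mS, i+1 ∉ S.erase mS := fun i hi hc =>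
        hvS i (Finset.mem_of_mem_erase hi) (Finset.mem_of_mem_erase hc)
      have hvTE : ∀ i ∈ T.erase mS, i+1 ∉ T.erase mS := fun i hi hc =>
        hvT i (Finset.mem_of_mem_erase hi) (Finset.mem_of_mem_erase hc)
      have hsSE : F ((mS:ℕ):ℤ) + ∑ j ∈ S.erase mS, F (j:ℤ) = n :=
        (Finset.add_sum_erase S (fun j : ℕ => F (j:ℤ)) hmemS).trans hsS
      have hsTE : F ((mS:ℕ):ℤ) + ∑ j ∈ T.erase mS, F (j:ℤ) = n :=
        (Finset.add_sum_erase T (fun j : ℕ => F (j:ℤ)) hmemT).trans hsT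
      have hpos := F_pos (mS:ℕ) (by omega)
      have hE : S.erase mS = T.erase mS :=
        IH (n - F ((mS:ℕ):ℤ)) (by omega) _ _ hvSE hvTE (by omega) (by omega)
      have : insert mS (S.erase mS) = insert mS (T.erase mS) := by rw [hE]
      rwa [Finset.insert_erase hmemS, Finset.insert_erase hmemT] at this

lemma zeckSet_eq (n : ℕ) (T : Finset ℕ) (hvT : ∀ i ∈ T, i+1 ∉ T)
    (hsT : ∑ j ∈ T, F (j:ℤ) = n) : zeckSet n = T := by
  obtain ⟨hv, hs, _⟩ := zeck_spec n
  exact zeck_unique n _ _ hv hvT hs hsT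

/-- The golden ratio `φ = (1 + √5)/2`. -/
noncomputable def phi : ℝ := (1 + Real.sqrt 5) / 2

lemma phi_pos : 0 < phi := by
  have : 0 ≤ Real.sqrt 5 := Real.sqrt_nonneg 5
  unfold phi; linarith

lemma phi_sq : phi ^ 2 = phi + 1 := by
  have h5 : Real.sqrt 5 ^ 2 = 5 := Real.sq_sqrt (by norm_num)
  unfold phi
  linear_combination h5 / 4

lemma geo (t : ℕ) : ∑ i ∈ range t, phi ^ (2*i+1) + 1 = phi ^ (2*t) := by
  induction t with
  | zero => simp
  | succ s ih =>
    have e1 : phi ^ (2*(s+1)) = phi^(2*s) * (phi+1) := by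
      rw [show 2*(s+1) = 2*s + 2 from by ring, pow_add, phi_sq]
    rw [Finset.sum_range_succ, e1, pow_succ, ← ih]
    ring

lemma sumA (t : ℕ) : ∑ i ∈ range t, F ((2*i+1:ℕ):ℤ) + 1 = F ((2*t:ℕ):ℤ) := by
  induction t with
  | zero => simp; decide
  | succ s ih =>
    rw [Finset.sum_range_succ]
    have e := F_rec (2*s)
    have e1 : F ((2*(s+1):ℕ):ℤ) = F ((2*s+2:ℕ):ℤ) := F_carg (by ring)
    omega

lemma sumB (s : ℕ) : ∑ i ∈ range (s+1), F ((2*i:ℕ):ℤ) + 1 = F ((2*s+1:ℕ):ℤ) := by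
  induction s with
  | zero => simp; decide
  | succ s ih =>
    rw [Finset.sum_range_succ]
    have e := F_rec (2*s+1)
    have e1 : F ((2*(s+1):ℕ):ℤ) = F ((2*s+1+1:ℕ):ℤ) := F_carg (by ring)
    have e2 : F ((2*(s+1)+1:ℕ):ℤ) = F ((2*s+1+2:ℕ):ℤ) := F_carg (by ring)
    omega

/-- `|n|`, the zeroth Zeckendorf digit of `n`. -/
def zd0 (n : ℕ) : ℕ := if 0 ∈ zeckSet n then 1 else 0

/-- `n‾ = ∑_j d_j φ^j`, the `n`-th whole number in base `φ`. -/
noncomputable def zbar (n : ℕ) : ℝ := ∑ j ∈ zeckSet n, phi ^ j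

/-- `n ⊙ φ^k = ∑_j d_j F^{j+k}`, the Zeckendorf digit shift. -/
def zshift (n : ℕ) (k : ℤ) : ℕ := ∑ j ∈ zeckSet n, F (j + k)

/-- The difference between consecutive whole numbers in base φ is
`(n+1)‾ − n‾ = φ^(−|n|)`. -/
theorem statement0 (n : ℕ) :
    zbar (n + 1) - zbar n = phi ^ (-(zd0 n : ℤ)) := by
  obtain ⟨hv, hs, hb⟩ := zeck_spec n
  by_cases h0 : 0 ∈ zeckSet n
  · -- Case B : zeroth digit is 1
    have hzd : zd0 n = 1 := by simp [zd0, h0]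
    rw [hzd]
    have hex : ∃ i, 2*(i+1) ∉ zeckSet n :=
      ⟨n, fun h => by have := hb _ h; have := F_ge (2*(n+1)); omega⟩
    obtain ⟨s, hsdef⟩ : ∃ s, Nat.find hex = s := ⟨_, rfl⟩
    have ht1 : 2*(s+1) ∉ zeckSet n := hsdef ▸ Nat.find_spec hex
    have ht2 : ∀ i, i < s+1 → 2*i ∈ zeckSet n := by
      intro i hi
      match i with
      | 0 => simpa using h0
      | (j+1) =>
        have := Nat.find_min hex (show j < Nat.find hex by omega)
        simpa using this
    have h2t1 : 2*s+1 ∉ zeckSet n := by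
      intro hmem
      have h1 : 2*s ∈ zeckSet n := ht2 s (by omega)
      have := hv _ h1
      have he : 2*s+1 = 2*s+1 := rfl
      exact this hmem
    set R := (range (s+1)).image (fun i => 2*i) with hRdef
    have hmemR : ∀ j, j ∈ R ↔ ∃ i, i < s+1 ∧ 2*i = j := by
      intro j; simp [hRdef, Finset.mem_image]
    have hRS : R ⊆ zeckSet n := fun j hj => by
      obtain ⟨i, hi, rfl⟩ := (hmemR j).mp hj; exact ht2 i hi
    have hnotT : (2*s+1) ∉ zeckSet n \ R := fun h => h2t1 (Finset.mem_sdiff.mp h).1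
    have hvT : ∀ i ∈ insert (2*s+1) (zeckSet n \ R), i+1 ∉ insert (2*s+1) (zeckSet n \ R) := by
      intro i hi hc
      rcases Finset.mem_insert.mp hi with rfl | hi
      · rcases Finset.mem_insert.mp hc with h | h
        · omega
        · have h2 : 2*s+1+1 = 2*(s+1) := by omega
          exact ht1 (h2 ▸ (Finset.mem_sdiff.mp h).1)
      · obtain ⟨hiS, hiR⟩ := Finset.mem_sdiff.mp hi
        rcases Finset.mem_insert.mp hc with h | h
        · exact hiR ((hmemR i).mpr ⟨s, by omega, by omega⟩)
        · exact hv _ hiS (Finset.mem_sdiff.mp h).1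
    have hsum_sdiff : ∑ j ∈ zeckSet n \ R, F (j:ℤ) + ∑ j ∈ R, F (j:ℤ) = n := by
      rw [Finset.sum_sdiff hRS]; exact hs
    have hsumR : ∑ j ∈ R, F (j:ℤ) + 1 = F ((2*s+1:ℕ):ℤ) := by
      rw [hRdef, Finset.sum_image (by intro a _ b _ h; simp only at h; omega)]
      exact sumB s
    have hsT : ∑ j ∈ insert (2*s+1) (zeckSet n \ R), F (j:ℤ) = n+1 := by
      rw [Finset.sum_insert hnotT]; omega
    have hz : zeckSet (n+1) = insert (2*s+1) (zeckSet n \ R) := zeckSet_eq _ _ hvT hsT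
    have hsum_sdiffR : ∑ j ∈ zeckSet n \ R, (phi ^ j) + ∑ j ∈ R, phi ^ j = zbar n := by
      rw [Finset.sum_sdiff hRS]; rfl
    have hsumRR : ∑ j ∈ R, (phi:ℝ) ^ j = ∑ i ∈ range (s+1), phi ^ (2*i) := by
      rw [hRdef, Finset.sum_image (by intro a _ b _ h; simp only at h; omega)]
    have hzb : zbar (n+1) = phi^(2*s+1) + ∑ j ∈ zeckSet n \ R, phi ^ j := by
      rw [zbar, hz, Finset.sum_insert hnotT]
    have hgeo : ∑ i ∈ range (s+1), phi ^ (2*i+1) + 1 = phi ^ (2*(s+1)) := geo (s+1)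
    have hmul : ∀ i : ℕ, (phi:ℝ) ^ (2*i+1) = phi * phi ^ (2*i) := fun i => by
      rw [pow_succ]; ring
    have hphine : phi ≠ 0 := ne_of_gt phi_pos
    have key : phi * (zbar (n+1) - zbar n) = 1 := by
      rw [hzb, ← hsum_sdiffR, hsumRR]
      have : phi * (phi^(2*s+1) + ∑ j ∈ zeckSet n \ R, phi ^ j
          - (∑ j ∈ zeckSet n \ R, phi ^ j + ∑ i ∈ range (s+1), phi ^ (2*i)))
          = phi ^ (2*(s+1)) - ∑ i ∈ range (s+1), (phi * phi ^ (2*i)) := by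
        have h1 : phi * phi^(2*s+1) = phi^(2*(s+1)) := by
          rw [show 2*(s+1) = 2*s+1+1 from by ring, pow_succ]; ring
        rw [← Finset.mul_sum, ← h1]; ring
      rw [this]
      have h2 : ∑ i ∈ range (s+1), (phi * phi ^ (2*i)) = ∑ i ∈ range (s+1), phi ^ (2*i+1) :=
        Finset.sum_congr rfl (fun i _ => (hmul i).symm)
      rw [h2]
      linarith [hgeo]
    have : zbar (n+1) - zbar n = 1 / phi := by
      field_simp at key ⊢
      linarith [key]
    rw [this]
    norm_num [zpow_neg, zpow_one]
  · -- Case A : zeroth digit is 0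
    have hzd : zd0 n = 0 := by simp [zd0, h0]
    rw [hzd]
    have hex : ∃ i, 2*i+1 ∉ zeckSet n :=
      ⟨n, fun h => by have := hb _ h; have := F_ge (2*n+1); omega⟩
    obtain ⟨t, htdef⟩ : ∃ t, Nat.find hex = t := ⟨_, rfl⟩
    have ht1 : 2*t+1 ∉ zeckSet n := htdef ▸ Nat.find_spec hex
    have ht2 : ∀ i, i < t → 2*i+1 ∈ zeckSet n := by
      intro i hi
      have := Nat.find_min hex (show i < Nat.find hex by omega)
      simpa using this
    have h2t : 2*t ∉ zeckSet n := by
      intro hmem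
      rcases Nat.eq_zero_or_pos t with h | h
      · rw [h] at hmem; norm_num at hmem; exact h0 hmem
      · have h1 : 2*(t-1)+1 ∈ zeckSet n := ht2 _ (by omega)
        have h2 := hv _ h1
        have he : 2*(t-1)+1+1 = 2*t := by omega
        exact h2 (he ▸ hmem)
    set R := (range t).image (fun i => 2*i+1) with hRdef
    have hmemR : ∀ j, j ∈ R ↔ ∃ i, i < t ∧ 2*i+1 = j := by
      intro j; simp [hRdef, Finset.mem_image]
    have hRS : R ⊆ zeckSet n := fun j hj => by
      obtain ⟨i, hi, rfl⟩ := (hmemR j).mp hj; exact ht2 i hi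
    have hnotT : (2*t) ∉ zeckSet n \ R := fun h => h2t (Finset.mem_sdiff.mp h).1
    have hvT : ∀ i ∈ insert (2*t) (zeckSet n \ R), i+1 ∉ insert (2*t) (zeckSet n \ R) := by
      intro i hi hc
      rcases Finset.mem_insert.mp hi with rfl | hi
      · rcases Finset.mem_insert.mp hc with h | h
        · omega
        · exact ht1 (Finset.mem_sdiff.mp h).1
      · obtain ⟨hiS, hiR⟩ := Finset.mem_sdiff.mp hi
        rcases Finset.mem_insert.mp hc with h | h
        · exact hiR ((hmemR i).mpr ⟨t-1, by omega, by omega⟩)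
        · exact hv _ hiS (Finset.mem_sdiff.mp h).1
    have hsum_sdiff : ∑ j ∈ zeckSet n \ R, F (j:ℤ) + ∑ j ∈ R, F (j:ℤ) = n := by
      rw [Finset.sum_sdiff hRS]; exact hs
    have hsumR : ∑ j ∈ R, F (j:ℤ) + 1 = F ((2*t:ℕ):ℤ) := by
      rw [hRdef, Finset.sum_image (by intro a _ b _ h; simp only at h; omega)]
      exact sumA t
    have hsT : ∑ j ∈ insert (2*t) (zeckSet n \ R), F (j:ℤ) = n+1 := by
      rw [Finset.sum_insert hnotT]; omega
    have hz : zeckSet (n+1) = insert (2*t) (zeckSet n \ R) := zeckSet_eq _ _ hvT hsT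
    have hsum_sdiffR : ∑ j ∈ zeckSet n \ R, (phi ^ j) + ∑ j ∈ R, phi ^ j = zbar n := by
      rw [Finset.sum_sdiff hRS]; rfl
    have hsumRR : ∑ j ∈ R, (phi:ℝ) ^ j = ∑ i ∈ range t, phi ^ (2*i+1) := by
      rw [hRdef, Finset.sum_image (by intro a _ b _ h; simp only at h; omega)]
    have hzb : zbar (n+1) = phi^(2*t) + ∑ j ∈ zeckSet n \ R, phi ^ j := by
      rw [zbar, hz, Finset.sum_insert hnotT]
    have hgeo := geo t
    rw [hzb, ← hsum_sdiffR, hsumRR]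
    norm_num
    linarith [hgeo]
end

section
/- For every natural number n and every integer j ≥ 0, the Fibonacci digit-shift satisfies (n+1) ⊙ φ^j − n ⊙ φ^j = F^(j−|n|); that is, the difference equals F^j if the zeroth Zeckendorf digit of n is 0, and equals F^(j−1) if it is 1. -/
open Finset

lemma F_mono_s1 : Monotone F := fun a b h => Nat.fib_mono (by omega)

lemma F_add (a : ℤ) (h : -2 ≤ a) : F (a + 2) = F a + F (a + 1) := by
  obtain ⟨t, ht⟩ : ∃ t : ℕ, a + 2 = t := ⟨(a+2).toNat, by omega⟩
  have h1 : (a + 2 + 2).toNat = t + 2 := by omega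
  have h2 : (a + 1 + 2).toNat = t + 1 := by omega
  have h3 : (a + 2).toNat = t := by omega
  simp [F, h1, h2, h3, Nat.fib_add_two]

lemma lt_F (g : ℕ) : g < F g := by
  induction g with
  | zero => simp [F]
  | succ g ih =>
    have h := F_add ((g:ℤ) - 1) (by omega)
    have e1 : (g:ℤ) - 1 + 2 = ((g+1:ℕ):ℤ) := by push_cast; ring
    have e2 : (g:ℤ) - 1 + 1 = (g:ℤ) := by ring
    rw [e1, e2] at h
    have hp : 0 < F ((g:ℤ) - 1) := F_pos _ (by omega)
    omega

lemma F_lt_F {a b : ℕ} (h : F (a:ℤ) < F (b:ℤ)) : a < b := by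
  by_contra h'
  exact absurd (F_mono_s1 (by exact_mod_cast Nat.le_of_not_lt h' : (b:ℤ) ≤ a)) (not_le.2 h)

lemma zeck_le : ∀ n : ℕ, ∀ i ∈ zeckSet n, F (i:ℤ) ≤ n := by
  intro n
  induction n using Nat.strong_induction_on with
  | _ n ih =>
    match n with
    | 0 => simp [zeckSet]
    | n+1 =>
      rw [zeckSet_succ]
      intro i hi
      rcases Finset.mem_insert.1 hi with h | h
      · subst h
        exact Nat.findGreatest_spec (P := fun i => F i ≤ n + 1) (m := 0) (Nat.zero_le _)
          (by show F ((0:ℕ):ℤ) ≤ n + 1; simp [F])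
      · have hlt : n + 1 - F (Nat.findGreatest (fun i => F i ≤ n + 1) (n + 1)) < n + 1 :=
          Nat.sub_lt (Nat.succ_pos n) (F_pos _ (by omega))
        exact le_trans (ih _ hlt i h) (Nat.sub_le _ _)

lemma top_eq {n g : ℕ} (h1 : F (g:ℤ) ≤ n) (h2 : n < F ((g+1:ℕ):ℤ)) :
    Nat.findGreatest (fun i => F i ≤ n) n = g := by
  rw [Nat.findGreatest_eq_iff]
  refine ⟨le_trans (le_of_lt (lt_F g)) h1, fun _ => h1, fun k hk hkn hFk => ?_⟩
  have : F ((g+1:ℕ):ℤ) ≤ F (k:ℤ) := F_mono_s1 (by exact_mod_cast hk)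
  omega

lemma zeck_decomp {n g : ℕ} (hn : 0 < n) (h1 : F (g:ℤ) ≤ n) (h2 : n < F ((g+1:ℕ):ℤ)) :
    zeckSet n = insert g (zeckSet (n - F (g:ℤ))) := by
  obtain ⟨m, rfl⟩ : ∃ m, n = m + 1 := ⟨n - 1, by omega⟩
  rw [zeckSet_succ, top_eq h1 h2]

lemma F_succ_lt (m : ℕ) : F (m:ℤ) < F ((m+1:ℕ):ℤ) := by
  have h := F_add ((m:ℤ) - 1) (by omega)
  have e1 : (m:ℤ) - 1 + 2 = ((m+1:ℕ):ℤ) := by push_cast; ring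
  have e2 : (m:ℤ) - 1 + 1 = (m:ℤ) := by ring
  rw [e1, e2] at h
  have hp : 0 < F ((m:ℤ) - 1) := F_pos _ (by omega)
  omega

lemma zeckSet_F (m : ℕ) : zeckSet (F (m:ℤ)) = {m} := by
  have h1 : 0 < F (m:ℤ) := F_pos _ (by omega)
  have := zeck_decomp h1 (le_refl _) (F_succ_lt m)
  simpa [zeckSet] using this

lemma zeck_mem_lt {N g : ℕ} (h : N < F (g:ℤ)) {i : ℕ} (hi : i ∈ zeckSet N) : i < g :=
  F_lt_F (lt_of_le_of_lt (zeck_le N i hi) h)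

lemma zshift_eq {n g m : ℕ} (h : zeckSet n = insert g (zeckSet m)) (hg : g ∉ zeckSet m)
    (j : ℤ) : zshift n j = F ((g:ℤ) + j) + zshift m j := by
  rw [zshift, h, Finset.sum_insert hg]; rfl

lemma zd0_congr {n g m : ℕ} (h : zeckSet n = insert g (zeckSet m)) (hg : g ≠ 0) :
    zd0 n = zd0 m := by
  simp only [zd0, h, Finset.mem_insert]
  simp [Ne.symm hg]

lemma F0 : F (0:ℤ) = 1 := by decide
lemma F1 : F (1:ℤ) = 2 := by decide
lemma F2 : F (2:ℤ) = 3 := by decide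

lemma zeckSet_one : zeckSet 1 = {0} := by
  have h := zeck_decomp (n := 1) (g := 0) one_pos (by norm_num [F0]) (by norm_num [F1])
  norm_num [F0] at h
  simpa [zeckSet] using h

lemma zeckSet_two : zeckSet 2 = {1} := by
  have h := zeck_decomp (n := 2) (g := 1) (by norm_num) (by norm_num [F1]) (by norm_num [F2])
  norm_num [F1] at h
  simpa [zeckSet] using h

lemma Q : ∀ m : ℕ, ∀ j : ℕ,
    (F ((m:ℤ) + 1 + j) : ℤ) - (zshift (F ((m+1:ℕ):ℤ) - 1) (j:ℤ) : ℤ) =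
      (F ((j:ℤ) - (zd0 (F ((m+1:ℕ):ℤ) - 1) : ℤ)) : ℤ) := by
  intro m
  induction m using Nat.strong_induction_on with
  | _ m ih =>
  intro j
  match m with
  | 0 =>
    have hsh : zshift 1 (j:ℤ) = F ((0:ℤ) + j) := by
      rw [zshift, zeckSet_one]; simp
    have hz : zd0 1 = 1 := by simp [zd0, zeckSet_one]
    have hadd := F_add ((j:ℤ) - 1) (by omega)
    norm_num [F1, hsh, hz]
    push_cast
    ring_nf
    ring_nf at hadd
    omega
  | 1 =>
    have hsh : zshift 2 (j:ℤ) = F ((1:ℤ) + j) := by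
      rw [zshift, zeckSet_two]; simp
    have hz : zd0 2 = 0 := by simp [zd0, zeckSet_two]
    have hadd := F_add ((j:ℤ)) (by omega)
    norm_num [F2, hsh, hz]
    push_cast
    ring_nf
    ring_nf at hadd
    omega
  | (k+2) =>
    have hid := F_add ((k:ℤ) + 1) (by omega)
    have e1 : (k:ℤ) + 1 + 2 = ((k+2+1:ℕ):ℤ) := by push_cast; ring
    have e2 : (k:ℤ) + 1 + 1 = ((k+2:ℕ):ℤ) := by push_cast; ring
    have e3 : (k:ℤ) + 1 = ((k+1:ℕ):ℤ) := by push_cast; ring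
    rw [e1, e2, e3] at hid
    have hp1 : 0 < F ((k+1:ℕ):ℤ) := F_pos _ (by omega)
    have hpm : 0 < F ((k+2:ℕ):ℤ) := F_pos _ (by omega)
    have hpm1 : 0 < F ((k+2+1:ℕ):ℤ) := F_pos _ (by omega)
    have h1 : F ((k+2:ℕ):ℤ) ≤ F ((k+2+1:ℕ):ℤ) - 1 := by omega
    have h2 : F ((k+2+1:ℕ):ℤ) - 1 < F ((k+2+1:ℕ):ℤ) := by omega
    have hdec : zeckSet (F ((k+2+1:ℕ):ℤ) - 1)
        = insert (k+2) (zeckSet (F ((k+2+1:ℕ):ℤ) - 1 - F ((k+2:ℕ):ℤ))) :=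
      zeck_decomp (by omega) h1 h2
    have hrem : F ((k+2+1:ℕ):ℤ) - 1 - F ((k+2:ℕ):ℤ) = F ((k+1:ℕ):ℤ) - 1 := by omega
    rw [hrem] at hdec
    have hnot : k + 2 ∉ zeckSet (F ((k+1:ℕ):ℤ) - 1) := by
      intro hmem
      have := zeck_mem_lt (g := k+1) (by omega) hmem
      omega
    have hsh := zshift_eq hdec hnot (j:ℤ)
    have hz := zd0_congr hdec (by omega)
    have hIH := ih k (by omega) j
    have hadd := F_add ((k:ℤ) + 1 + j) (by omega)
    rw [hz, hsh]
    push_cast at hadd hIH hid hsh ⊢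
    ring_nf at hadd hIH hid hsh ⊢
    omega

/-- For every `n` and every integer `j ≥ 0`,
`(n+1) ⊙ φ^j − n ⊙ φ^j = F^(j−|n|)`. -/
theorem statement1 (n j : ℕ) :
    (zshift (n + 1) (j : ℤ) : ℤ) - (zshift n (j : ℤ) : ℤ) =
      (F ((j : ℤ) - (zd0 n : ℤ)) : ℤ) := by
  induction n using Nat.strong_induction_on with
  | _ n ih =>
  rcases Nat.eq_zero_or_pos n with rfl | hn
  · -- n = 0 : zeckSet 1 = {0}
    have hsh1 : zshift 1 (j:ℤ) = F ((0:ℤ) + j) := by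
      rw [zshift, zeckSet_one]; simp
    have hsh0 : zshift 0 (j:ℤ) = 0 := by rw [zshift]; simp [zeckSet]
    have hz : zd0 0 = 0 := by simp [zd0, zeckSet]
    rw [hsh1, hsh0, hz]
    norm_num
  · -- n ≥ 1 : find the greedy top digit g of n
    set g := Nat.findGreatest (fun i => F i ≤ n) n with hg
    have hFg : F (g:ℤ) ≤ n :=
      Nat.findGreatest_spec (P := fun i => F i ≤ n) (m := 0) (Nat.zero_le _)
        (by show F ((0:ℕ):ℤ) ≤ n; simp only [Nat.cast_zero, F0]; omega)
    have hub : n < F ((g+1:ℕ):ℤ) := by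
      rcases le_or_gt (g+1) n with h | h
      · have := Nat.findGreatest_is_greatest (P := fun i => F i ≤ n) (k := g+1)
          (by omega) h
        omega
      · calc n < g + 1 := by omega
          _ < F ((g+1:ℕ):ℤ) := lt_F (g+1)
    -- Fibonacci identity F(g+1) = F(g-1) + F(g) (for g ≥ 1)
    rcases le_or_gt (F ((g+1:ℕ):ℤ)) (n+1) with hB | hA
    · -- n + 1 = F(g+1) : use Q
      have hn1 : n + 1 = F ((g+1:ℕ):ℤ) := by omega
      have hzeck : zeckSet (n+1) = {g+1} := by rw [hn1]; exact zeckSet_F (g+1)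
      have hsh : zshift (n+1) (j:ℤ) = F (((g+1:ℕ):ℤ) + j) := by
        rw [zshift, hzeck]; simp
      have hQ := Q g j
      have hn' : F ((g+1:ℕ):ℤ) - 1 = n := by omega
      rw [hn'] at hQ
      have e : ((g+1:ℕ):ℤ) + j = (g:ℤ) + 1 + j := by push_cast; ring
      rw [hsh, e]
      omega
    · -- n + 1 < F(g+1) : same top digit, use IH
      have hg1 : 1 ≤ g := by
        by_contra h
        have : g = 0 := by omega
        rw [this] at hA
        have h2 : F ((0+1:ℕ):ℤ) = 2 := by norm_num [F1]
        omega
      have hid := F_add ((g:ℤ) - 1) (by omega)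
      have e1 : (g:ℤ) - 1 + 2 = ((g+1:ℕ):ℤ) := by push_cast; ring
      have e2 : (g:ℤ) - 1 + 1 = ((g:ℕ):ℤ) := by push_cast; ring
      have e3 : (g:ℤ) - 1 = ((g-1:ℕ):ℤ) := by push_cast [hg1]; ring
      rw [e1, e2, e3] at hid
      have hmono : F ((g-1:ℕ):ℤ) ≤ F ((g:ℕ):ℤ) := F_mono_s1 (by exact_mod_cast Nat.sub_le g 1)
      set m := n - F ((g:ℕ):ℤ) with hm
      have hm1 : n + 1 - F ((g:ℕ):ℤ) = m + 1 := by omega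
      have hdecn : zeckSet n = insert g (zeckSet m) := zeck_decomp hn hFg hub
      have hdecn1 : zeckSet (n+1) = insert g (zeckSet (m+1)) := by
        have := zeck_decomp (n := n+1) (g := g) (by omega) (by omega) hA
        rwa [hm1] at this
      have hnot : g ∉ zeckSet m := by
        intro hmem
        have := zeck_mem_lt (g := g) (by omega) hmem
        omega
      have hnot1 : g ∉ zeckSet (m+1) := by
        intro hmem
        have := zeck_mem_lt (g := g) (by omega) hmem
        omega
      have hshn := zshift_eq hdecn hnot (j:ℤ)
      have hshn1 := zshift_eq hdecn1 hnot1 (j:ℤ)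
      have hz : zd0 n = zd0 m := zd0_congr hdecn (by omega)
      have hIH := ih m (by omega)
      rw [hshn, hshn1, hz]
      push_cast
      omega
end

section
/- Let m ≥ 0 and 0 ≤ k ≤ m+2 be integers. Then |F^(m−k)/F^m − φ^(−k)| = (1/φ^(m+2)) · (F^(k−2)/F^m), this quantity is strictly less than 1/F^m, and consequently F^(m−k)/F^m is the best rational approximation to φ^(−k) with denominator F^m: for every integer a, |a/F^m − φ^(−k)| ≥ |F^(m−k)/F^m − φ^(−k)|. -/
open Finset
open Real

lemma key' (d j : ℕ) :
    goldenRatio ^ (d + j) * Nat.fib d - goldenRatio ^ d * Nat.fib (d + j)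
      = (-1 : ℝ) ^ (d + 1) * Nat.fib j := by
  have hm : goldenRatio ^ d * goldenConj ^ d = (-1 : ℝ) ^ d := by
    rw [← mul_pow, goldenRatio_mul_goldenConj]
  rw [Real.coe_fib_eq, Real.coe_fib_eq, Real.coe_fib_eq, pow_add, pow_add]
  linear_combination ((goldenConj ^ j - goldenRatio ^ j) / Real.sqrt 5) * hm

lemma two_fib_le' (n : ℕ) : 2 * (Nat.fib (n + 2) : ℝ) ≤ goldenRatio ^ (n + 2) := by
  have hs : Real.sqrt 5 ^ 2 = 5 := Real.sq_sqrt (by norm_num)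
  have hs0 : 0 ≤ Real.sqrt 5 := Real.sqrt_nonneg 5
  have hs2 : (2 : ℝ) ≤ Real.sqrt 5 := by nlinarith
  induction n using Nat.twoStepInduction with
  | zero =>
    show 2 * ((1 : ℕ) : ℝ) ≤ goldenRatio ^ 2
    unfold goldenRatio; push_cast; nlinarith
  | one =>
    show 2 * ((2 : ℕ) : ℝ) ≤ goldenRatio ^ 3
    unfold goldenRatio; push_cast; nlinarith
  | more n ih1 ih2 =>
    have hg := goldenRatio_pow_sub_goldenRatio_pow (n + 2)
    simp only [show n + 1 + 2 = n + 2 + 1 from by ring] at ih2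
    rw [Nat.fib_add_two]
    push_cast
    linarith [ih1, ih2, hg]

lemma quot (g fd fn fk : ℝ) (hg : 0 < g) (hfn : 0 < fn) (d k : ℕ)
    (habs : |g ^ (d + k) * fd - g ^ d * fn| = fk) :
    |fd / fn - (g ^ k)⁻¹| = fk / (g ^ (d + k) * fn) := by
  have h1 : fd / fn - (g ^ k)⁻¹ = (g ^ (d + k) * fd - g ^ d * fn) / (g ^ (d + k) * fn) := by
    rw [pow_add]
    field_simp
  rw [h1, abs_div, habs, abs_of_pos (by positivity)]

/-- For `0 ≤ k ≤ m+2`,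
`|F^(m−k)/F^m − φ^(−k)| = (1/φ^(m+2))·(F^(k−2)/F^m) < 1/F^m`, and `F^(m−k)/F^m` is the
best rational approximation to `φ^(−k)` with denominator `F^m`. -/
theorem statement6 (m k : ℕ) (hk : k ≤ m + 2) :
    |(F ((m : ℤ) - k) : ℝ) / (F (m : ℤ) : ℝ) - phi ^ (-(k : ℤ))| =
        1 / phi ^ ((m : ℤ) + 2) * ((F ((k : ℤ) - 2) : ℝ) / (F (m : ℤ) : ℝ)) ∧
    |(F ((m : ℤ) - k) : ℝ) / (F (m : ℤ) : ℝ) - phi ^ (-(k : ℤ))| < 1 / (F (m : ℤ) : ℝ) ∧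
    ∀ a : ℤ,
      |(F ((m : ℤ) - k) : ℝ) / (F (m : ℤ) : ℝ) - phi ^ (-(k : ℤ))| ≤
        |(a : ℝ) / (F (m : ℤ) : ℝ) - phi ^ (-(k : ℤ))| := by
  have hphi : phi = goldenRatio := rfl
  obtain ⟨d, hdk⟩ : ∃ d, d + k = m + 2 := ⟨m + 2 - k, by omega⟩
  have hF1 : F ((m : ℤ) - k) = Nat.fib d := by
    have h : ((m : ℤ) - k + 2).toNat = d := by omega
    simp [F, h]
  have hF2 : F (m : ℤ) = Nat.fib (m + 2) := by
    have h : ((m : ℤ) + 2).toNat = m + 2 := by omega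
    simp [F, h]
  have hF3 : F ((k : ℤ) - 2) = Nat.fib k := by
    have h : ((k : ℤ) - 2 + 2).toNat = k := by omega
    simp [F, h]
  have hzp1 : phi ^ (-(k : ℤ)) = (goldenRatio ^ k)⁻¹ := by
    rw [hphi, zpow_neg, zpow_natCast]
  have hzp2 : phi ^ ((m : ℤ) + 2) = goldenRatio ^ (m + 2) := by
    rw [hphi, show (m : ℤ) + 2 = ((m + 2 : ℕ) : ℤ) from by push_cast; ring, zpow_natCast]
  rw [hF1, hF2, hF3, hzp1, hzp2]
  have hfn : (0 : ℝ) < Nat.fib (m + 2) := by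
    exact_mod_cast Nat.fib_pos.mpr (by omega)
  have hG : (0 : ℝ) < goldenRatio ^ (m + 2) := pow_pos goldenRatio_pos _
  have hfk0 : (0 : ℝ) ≤ Nat.fib k := Nat.cast_nonneg _
  have habs : |goldenRatio ^ (d + k) * (Nat.fib d : ℝ)
      - goldenRatio ^ d * (Nat.fib (m + 2) : ℝ)| = (Nat.fib k : ℝ) := by
    rw [← hdk, key' d k, abs_mul]
    simp
  have heq := quot goldenRatio (Nat.fib d) (Nat.fib (m + 2)) (Nat.fib k) goldenRatio_pos hfn d k habs
  rw [hdk] at heq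
  have h2f : 2 * (Nat.fib k : ℝ) ≤ goldenRatio ^ (m + 2) := by
    calc 2 * (Nat.fib k : ℝ) ≤ 2 * (Nat.fib (m + 2) : ℝ) := by
          have := Nat.fib_mono hk
          have : (Nat.fib k : ℝ) ≤ Nat.fib (m + 2) := by exact_mod_cast this
          linarith
      _ ≤ goldenRatio ^ (m + 2) := two_fib_le' m
  refine ⟨?_, ?_, ?_⟩
  · rw [heq, div_mul_div_comm, one_mul]
  · rw [heq, div_lt_div_iff₀ (by positivity) hfn]
    nlinarith
  · intro a
    rw [heq]
    by_cases ha : a = (Nat.fib d : ℤ)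
    · subst ha
      push_cast
      exact le_of_eq heq.symm
    · have h1 : (1 : ℝ) ≤ |(a : ℝ) - Nat.fib d| := by
        have h := Int.one_le_abs (sub_ne_zero.mpr ha)
        exact_mod_cast h
      have tri : |(a : ℝ) / Nat.fib (m + 2) - (Nat.fib d : ℝ) / Nat.fib (m + 2)|
          ≤ |(a : ℝ) / Nat.fib (m + 2) - (goldenRatio ^ k)⁻¹|
            + |(Nat.fib d : ℝ) / Nat.fib (m + 2) - (goldenRatio ^ k)⁻¹| := by
        have h := abs_sub_le ((a : ℝ) / Nat.fib (m + 2)) ((goldenRatio ^ k)⁻¹)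
          ((Nat.fib d : ℝ) / Nat.fib (m + 2))
        rwa [abs_sub_comm ((goldenRatio ^ k)⁻¹)] at h
      have hdiff : |(a : ℝ) / Nat.fib (m + 2) - (Nat.fib d : ℝ) / Nat.fib (m + 2)|
          = |(a : ℝ) - Nat.fib d| / Nat.fib (m + 2) := by
        rw [div_sub_div_same, abs_div, abs_of_pos hfn]
      have hge : 1 / (Nat.fib (m + 2) : ℝ)
          ≤ |(a : ℝ) / Nat.fib (m + 2) - (Nat.fib d : ℝ) / Nat.fib (m + 2)| := by
        rw [hdiff]
        gcongr
      have h2e : 2 * ((Nat.fib k : ℝ) / (goldenRatio ^ (m + 2) * Nat.fib (m + 2)))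
          ≤ 1 / Nat.fib (m + 2) := by
        rw [mul_div_assoc', div_le_div_iff₀ (by positivity) hfn]
        nlinarith
      linarith [heq, tri, hge, h2e]
end
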